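/- (Minimal and maximal extensions.) Let K be a bounded non-negative contraction (0 ≤ K ≤ I) on a complex Hilbert space H, M a closed subspace of H, N = M^⊥, and T = P_M K|_M, Γ = P_N K|_M, S = P_N K|_N the compressions of K. For ε > 0 let Λ_{1,ε} = P_N (K + εI)^{-1}|_N and Λ_{2,ε} = P_N ((1+ε)I − K)^{-1}|_N, and suppose G₁, G₂ are bounded operators on N such that Λ_{1,ε}^{-1} y → G₁ y and Λ_{2,ε}^{-1} y → G₂ y for every y ∈ N as ε → 0⁺. Set X_μ = S − G₁ and X_M = S + G₂. Then the block operators K_{X_μ} = [[T, Γ*],[Γ, X_μ]] and K_{X_M} = [[T, Γ*],[Γ, X_M]] are non-negative contractions, and for every bounded self-adjoint X on N for which K_X = [[T, Γ*],[Γ, X]] is a non-negative contraction one has K_{X_μ} ≤ K_X ≤ K_{X_M} as operators on H. -/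

import Mathlib

open ContinuousLinearMap

/-- The block operator `[[T, Γ*],[Γ, X]]` on `H` relative to the decomposition `H = M ⊕ Mᗮ`,
sending `m + n` (`m ∈ M`, `n ∈ Mᗮ`) to `(Tm + Γ*n) + (Γm + Xn)`. -/
noncomputable def blockOpH
    {H : Type*} [NormedAddCommGroup H] [InnerProductSpace ℂ H] [CompleteSpace H]
    (M : Submodule ℂ H) [CompleteSpace M]
    (T : M →L[ℂ] M) (Γ : M →L[ℂ] Mᗮ) (X : Mᗮ →L[ℂ] Mᗮ) : H →L[ℂ] H :=
  M.subtypeL.comp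
      (T.comp (Submodule.orthogonalProjectionOnto M) +
        (ContinuousLinearMap.adjoint Γ).comp (Submodule.orthogonalProjectionOnto Mᗮ)) +
    Mᗮ.subtypeL.comp
      (Γ.comp (Submodule.orthogonalProjectionOnto M) + X.comp (Submodule.orthogonalProjectionOnto Mᗮ))

namespace Stmt9Aux

variable {H : Type*} [NormedAddCommGroup H] [InnerProductSpace ℂ H] [CompleteSpace H]
variable {M : Submodule ℂ H} [CompleteSpace M]

local notation "⟪" x ", " y "⟫" => @inner ℂ _ _ x y

lemma inner_blockOpH (K : H →L[ℂ] H) (hKsa : IsSelfAdjoint K)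
    (T : M →L[ℂ] M) (Γ : M →L[ℂ] Mᗮ) (S : Mᗮ →L[ℂ] Mᗮ)
    (hT : T = (Submodule.orthogonalProjectionOnto M).comp (K.comp M.subtypeL))
    (hΓ : Γ = (Submodule.orthogonalProjectionOnto Mᗮ).comp (K.comp M.subtypeL))
    (hS : S = (Submodule.orthogonalProjectionOnto Mᗮ).comp (K.comp Mᗮ.subtypeL))
    (X : Mᗮ →L[ℂ] Mᗮ) (h : H) :
    ⟪blockOpH M T Γ X h, h⟫ = ⟪K h, h⟫
      + ⟪X (Submodule.orthogonalProjectionOnto Mᗮ h) - S (Submodule.orthogonalProjectionOnto Mᗮ h),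
          Submodule.orthogonalProjectionOnto Mᗮ h⟫ := by
  set m : M := Submodule.orthogonalProjectionOnto M h with hm
  set y : Mᗮ := Submodule.orthogonalProjectionOnto Mᗮ h with hy
  have hh : (m : H) + (y : H) = h :=
    Submodule.starProjection_add_starProjection_orthogonal (K := M) h
  have hb : blockOpH M T Γ X h
      = (((T m : M) : H) + ((ContinuousLinearMap.adjoint Γ y : M) : H))
        + (((Γ m : Mᗮ) : H) + ((X y : Mᗮ) : H)) := by
    simp [blockOpH, ← hm, ← hy]
  have horth : ∀ (a : M) (b : Mᗮ), ⟪(a : H), (b : H)⟫ = 0 := fun a b =>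
    Submodule.inner_right_of_mem_orthogonal a.2 b.2
  have horth' : ∀ (a : M) (b : Mᗮ), ⟪(b : H), (a : H)⟫ = 0 := fun a b =>
    Submodule.inner_left_of_mem_orthogonal a.2 b.2
  have h1 : ⟪((T m : M) : H), (m : H)⟫ = ⟪K (m : H), (m : H)⟫ := by
    rw [← Submodule.coe_inner, hT]
    simpa using Submodule.inner_orthogonalProjectionOnto_eq_of_mem_right (K := M) m (K (m : H))
  have h3 : ⟪((ContinuousLinearMap.adjoint Γ y : M) : H), (m : H)⟫
      = ⟪K (y : H), (m : H)⟫ := by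
    rw [← Submodule.coe_inner, ContinuousLinearMap.adjoint_inner_left, hΓ]
    rw [show ((((Submodule.orthogonalProjectionOnto Mᗮ).comp (K.comp M.subtypeL)) : M →L[ℂ] Mᗮ) m)
        = Submodule.orthogonalProjectionOnto Mᗮ (K (m : H)) from rfl]
    rw [Submodule.inner_orthogonalProjectionOnto_eq_of_mem_left]
    exact (hKsa.isSymmetric (y : H) (m : H)).symm
  have h6 : ⟪((Γ m : Mᗮ) : H), (y : H)⟫ = ⟪K (m : H), (y : H)⟫ := by
    rw [← Submodule.coe_inner, hΓ]
    simpa using Submodule.inner_orthogonalProjectionOnto_eq_of_mem_right (K := Mᗮ) y (K (m : H))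
  have h8 : ⟪((S y : Mᗮ) : H), (y : H)⟫ = ⟪K (y : H), (y : H)⟫ := by
    rw [← Submodule.coe_inner, hS]
    simpa using Submodule.inner_orthogonalProjectionOnto_eq_of_mem_right (K := Mᗮ) y (K (y : H))
  have h8' : ⟪X y - S y, y⟫ = ⟪((X y : Mᗮ) : H), (y : H)⟫ - ⟪K (y : H), (y : H)⟫ := by
    rw [inner_sub_left, ← h8, Submodule.coe_inner, Submodule.coe_inner]
  rw [hb, ← hh, h8']
  simp only [inner_add_left, inner_add_right, map_add]
  rw [h1, h3, h6, horth (T m) y, horth (ContinuousLinearMap.adjoint Γ y) y,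
    horth' m (Γ m), horth' m (X y)]
  ring

end Stmt9Aux

namespace Stmt9Aux2

variable {H : Type*} [NormedAddCommGroup H] [InnerProductSpace ℂ H] [CompleteSpace H]
variable {M : Submodule ℂ H} [CompleteSpace M]

local notation "⟪" x ", " y "⟫" => @inner ℂ _ _ x y

open RCLike

lemma lambda_symm (K' : H →L[ℂ] H) (hK'sa : IsSelfAdjoint K')
    (Λ : Mᗮ →L[ℂ] Mᗮ)
    (hΛ : Λ = (Submodule.orthogonalProjectionOnto Mᗮ).comp ((Ring.inverse K').comp Mᗮ.subtypeL)) :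
    ∀ a b : Mᗮ, ⟪Λ a, b⟫ = ⟪a, Λ b⟫ := by
  have hR : IsSelfAdjoint (Ring.inverse K') := by
    unfold IsSelfAdjoint
    rw [← Ring.inverse_star, hK'sa.star_eq]
  intro a b
  rw [hΛ]
  show ⟪Submodule.orthogonalProjectionOnto Mᗮ (Ring.inverse K' (a : H)), b⟫
      = ⟪a, Submodule.orthogonalProjectionOnto Mᗮ (Ring.inverse K' (b : H))⟫
  rw [Submodule.inner_orthogonalProjectionOnto_eq_of_mem_right, Submodule.inner_orthogonalProjectionOnto_eq_of_mem_left]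
  exact hR.isSymmetric (a : H) (b : H)

lemma inv_symm (Λ : Mᗮ →L[ℂ] Mᗮ) (hΛu : IsUnit Λ)
    (hsym : ∀ a b : Mᗮ, ⟪Λ a, b⟫ = ⟪a, Λ b⟫) :
    ∀ a b : Mᗮ, ⟪Ring.inverse Λ a, b⟫ = ⟪a, Ring.inverse Λ b⟫ := by
  have hmul : ∀ v : Mᗮ, Λ (Ring.inverse Λ v) = v := by
    intro v
    have : (Λ * Ring.inverse Λ) v = (1 : Mᗮ →L[ℂ] Mᗮ) v := by
      rw [Ring.mul_inverse_cancel Λ hΛu]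
    simpa using this
  intro a b
  calc ⟪Ring.inverse Λ a, b⟫ = ⟪Ring.inverse Λ a, Λ (Ring.inverse Λ b)⟫ := by rw [hmul]
    _ = ⟪Λ (Ring.inverse Λ a), Ring.inverse Λ b⟫ := (hsym _ _).symm
    _ = ⟪a, Ring.inverse Λ b⟫ := by rw [hmul]

lemma core (K' : H →L[ℂ] H) (hK' : K'.IsPositive)
    (Λ : Mᗮ →L[ℂ] Mᗮ)
    (hΛ : Λ = (Submodule.orthogonalProjectionOnto Mᗮ).comp ((Ring.inverse K').comp Mᗮ.subtypeL))
    (hΛu : IsUnit Λ) :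
    (∀ (y : Mᗮ) (h : H), Submodule.orthogonalProjectionOnto Mᗮ h = y →
       re ⟪Ring.inverse Λ y, y⟫ ≤ re ⟪K' h, h⟫) ∧
    (∀ y : Mᗮ, ∃ h : H, Submodule.orthogonalProjectionOnto Mᗮ h = y ∧
       re ⟪Ring.inverse Λ y, y⟫ = re ⟪K' h, h⟫) := by
  have hmul : ∀ v : Mᗮ, Λ (Ring.inverse Λ v) = v := by
    intro v
    have : (Λ * Ring.inverse Λ) v = (1 : Mᗮ →L[ℂ] Mᗮ) v := by
      rw [Ring.mul_inverse_cancel Λ hΛu]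
    simpa using this
  by_cases hu : IsUnit K'
  · have hmulK : ∀ v : H, K' (Ring.inverse K' v) = v := by
      intro v
      have : (K' * Ring.inverse K') v = (1 : H →L[ℂ] H) v := by
        rw [Ring.mul_inverse_cancel K' hu]
      simpa using this
    -- main construction
    have key : ∀ y : Mᗮ, ∃ h₀ : H, Submodule.orthogonalProjectionOnto Mᗮ h₀ = y ∧
        K' h₀ = ((Ring.inverse Λ y : Mᗮ) : H) ∧
        ⟪K' h₀, h₀⟫ = ⟪Ring.inverse Λ y, y⟫ := by
      intro y
      set z : Mᗮ := Ring.inverse Λ y with hz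
      refine ⟨Ring.inverse K' (z : H), ?_, hmulK _, ?_⟩
      · have : Submodule.orthogonalProjectionOnto Mᗮ (Ring.inverse K' (z : H)) = Λ z := by
          rw [hΛ]; rfl
        rw [this, hz, hmul]
      · rw [hmulK]
        set h₀ : H := Ring.inverse K' (z : H) with hh0
        have hdec : ((Submodule.orthogonalProjectionOnto M h₀ : M) : H)
            + ((Submodule.orthogonalProjectionOnto Mᗮ h₀ : Mᗮ) : H) = h₀ :=
          Submodule.starProjection_add_starProjection_orthogonal (K := M) h₀
        have hP2 : Submodule.orthogonalProjectionOnto Mᗮ h₀ = y := by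
          have : Submodule.orthogonalProjectionOnto Mᗮ (Ring.inverse K' (z : H)) = Λ z := by
            rw [hΛ]; rfl
          rw [hh0, this, hz, hmul]
        rw [← hdec, inner_add_right, hP2,
          Submodule.inner_left_of_mem_orthogonal (Submodule.orthogonalProjectionOnto M h₀).2 z.2,
          zero_add, Submodule.coe_inner]
    constructor
    · intro y h hPh
      obtain ⟨h₀, hP0, hK0, hval⟩ := key y
      set u : H := h - h₀ with hu'
      have hPu : Submodule.orthogonalProjectionOnto Mᗮ u = 0 := by
        rw [hu', map_sub, hPh, hP0, sub_self]
      have hzu : ⟪((Ring.inverse Λ y : Mᗮ) : H), u⟫ = 0 := by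
        have := Submodule.inner_orthogonalProjectionOnto_eq_of_mem_left (K := Mᗮ) (Ring.inverse Λ y) u
        rw [hPu] at this
        simpa using this.symm
      have hsplit : ⟪K' h, h⟫ = ⟪K' h₀, h₀⟫ + ⟪K' u, u⟫
          + (⟪K' h₀, u⟫ + ⟪K' u, h₀⟫) := by
        have : h = h₀ + u := by rw [hu']; abel
        rw [this, map_add, inner_add_left, inner_add_right, inner_add_right]
        ring
      have hc1 : ⟪K' h₀, u⟫ = 0 := by rw [hK0]; exact hzu
      have hc2 : ⟪K' u, h₀⟫ = 0 :=
        calc ⟪K' u, h₀⟫ = ⟪u, K' h₀⟫ := hK'.isSelfAdjoint.isSymmetric u h₀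
          _ = 0 := by rw [hK0, ← inner_conj_symm, hzu, map_zero]
      rw [hsplit, hc1, hc2, hval]
      simp only [add_zero, map_add]
      have := hK'.re_inner_nonneg_left u
      linarith
    · intro y
      obtain ⟨h₀, hP0, _, hval⟩ := key y
      exact ⟨h₀, hP0, by rw [hval]⟩
  · -- degenerate case : Ring.inverse K' = 0, so Λ = 0, so Mᗮ is trivial-ish
    have hΛ0 : Λ = 0 := by
      rw [hΛ, Ring.inverse_non_unit _ hu]
      ext x
      simp
    have h01 : (0 : Mᗮ →L[ℂ] Mᗮ) = 1 := isUnit_zero_iff.mp (hΛ0 ▸ hΛu)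
    have hy0 : ∀ y : Mᗮ, y = 0 := by
      intro y
      have : (1 : Mᗮ →L[ℂ] Mᗮ) y = y := by simp
      rw [← h01] at this
      simpa using this.symm
    constructor
    · intro y h _
      rw [hy0 y]
      simpa using hK'.re_inner_nonneg_left h
    · intro y
      refine ⟨0, by rw [map_zero, hy0 y], ?_⟩
      rw [hy0 y]
      simp

end Stmt9Aux2

namespace Stmt9Aux3

variable {H : Type*} [NormedAddCommGroup H] [InnerProductSpace ℂ H] [CompleteSpace H]
variable {M : Submodule ℂ H} [CompleteSpace M]

local notation "⟪" x ", " y "⟫" => @inner ℂ _ _ x y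

open RCLike Filter

lemma smul_one_pos (ε : ℝ) (hε : 0 ≤ ε) : ((ε : ℂ) • (1 : H →L[ℂ] H)).IsPositive := by
  constructor
  · rw [← ContinuousLinearMap.isSelfAdjoint_iff_isSymmetric]
    unfold IsSelfAdjoint
    rw [star_smul, star_one, Complex.star_def, Complex.conj_ofReal]
  · intro x
    rw [ContinuousLinearMap.reApplyInnerSelf_apply]
    simp only [ContinuousLinearMap.smul_apply, ContinuousLinearMap.one_apply]
    rw [inner_smul_left, Complex.conj_ofReal]
    rw [show re ((ε:ℂ) * ⟪x, x⟫) = ε * re ⟪x, x⟫ from Complex.re_ofReal_mul ε _]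
    exact mul_nonneg hε inner_self_nonneg

lemma shift_pos (K : H →L[ℂ] H) (hK : K.IsPositive) (ε : ℝ) (hε : 0 < ε) :
    (K + (ε : ℂ) • (1 : H →L[ℂ] H)).IsPositive :=
  hK.add (smul_one_pos ε hε.le)

lemma shift_inner (K : H →L[ℂ] H) (ε : ℝ) (h : H) :
    re ⟪(K + (ε : ℂ) • (1 : H →L[ℂ] H)) h, h⟫ = re ⟪K h, h⟫ + ε * re ⟪h, h⟫ := by
  simp only [ContinuousLinearMap.add_apply, ContinuousLinearMap.smul_apply,
    ContinuousLinearMap.one_apply, inner_add_left, inner_smul_left, Complex.conj_ofReal, map_add]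
  rw [show re ((ε:ℂ) * ⟪h, h⟫) = ε * re ⟪h, h⟫ from Complex.re_ofReal_mul ε _]

set_option maxHeartbeats 1000000 in
lemma facts (K : H →L[ℂ] H) (hK : K.IsPositive)
    (Λ : ℝ → (Mᗮ →L[ℂ] Mᗮ))
    (hΛ : ∀ ε : ℝ, 0 < ε → Λ ε = (Submodule.orthogonalProjectionOnto Mᗮ).comp
      ((Ring.inverse (K + (ε : ℂ) • (1 : H →L[ℂ] H))).comp Mᗮ.subtypeL))
    (hΛu : ∀ ε : ℝ, 0 < ε → IsUnit (Λ ε))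
    (G : Mᗮ →L[ℂ] Mᗮ)
    (hG : ∀ y : Mᗮ, Filter.Tendsto (fun ε : ℝ => Ring.inverse (Λ ε) y)
      (nhdsWithin 0 (Set.Ioi 0)) (nhds (G y))) :
    (∀ h : H, re ⟪G (Submodule.orthogonalProjectionOnto Mᗮ h), (Submodule.orthogonalProjectionOnto Mᗮ h : Mᗮ)⟫
        ≤ re ⟪K h, h⟫) ∧
    (∀ (y : Mᗮ) (c : ℝ), (∀ h : H, Submodule.orthogonalProjectionOnto Mᗮ h = y → c ≤ re ⟪K h, h⟫) →
       c ≤ re ⟪G y, y⟫) ∧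
    (∀ a b : Mᗮ, ⟪G a, b⟫ = ⟪a, G b⟫) := by
  have hpos : ∀ ε : ℝ, 0 < ε → (K + (ε : ℂ) • (1 : H →L[ℂ] H)).IsPositive :=
    shift_pos K hK
  have hGre : ∀ a b : Mᗮ, Tendsto (fun ε : ℝ => ⟪Ring.inverse (Λ ε) a, b⟫)
      (nhdsWithin 0 (Set.Ioi 0)) (nhds ⟪G a, b⟫) :=
    fun a b => (hG a).inner tendsto_const_nhds
  have hEv : ∀ᶠ ε : ℝ in nhdsWithin 0 (Set.Ioi 0), 0 < ε := self_mem_nhdsWithin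
  refine ⟨?_, ?_, ?_⟩
  · intro h
    set y : Mᗮ := Submodule.orthogonalProjectionOnto Mᗮ h
    have hf : Tendsto (fun ε : ℝ => re ⟪Ring.inverse (Λ ε) y, y⟫)
        (nhdsWithin 0 (Set.Ioi 0)) (nhds (re ⟪G y, y⟫)) :=
      (RCLike.continuous_re.tendsto _).comp (hGre y y)
    have hg : Tendsto (fun ε : ℝ => re ⟪K h, h⟫ + ε * re ⟪h, h⟫)
        (nhdsWithin 0 (Set.Ioi 0)) (nhds (re ⟪K h, h⟫)) := by
      have : Tendsto (fun ε : ℝ => re ⟪K h, h⟫ + ε * re ⟪h, h⟫)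
          (nhds 0) (nhds (re ⟪K h, h⟫ + 0 * re ⟪h, h⟫)) := by
        apply Continuous.tendsto
        continuity
      simpa using this.mono_left nhdsWithin_le_nhds
    refine le_of_tendsto_of_tendsto hf hg (hEv.mono fun ε hε => ?_)
    have hcore := (Stmt9Aux2.core (K + (ε : ℂ) • (1 : H →L[ℂ] H)) (hpos ε hε)
      (Λ ε) (hΛ ε hε) (hΛu ε hε)).1 y h rfl
    rw [shift_inner] at hcore
    exact hcore
  · intro y c hc
    have hf : Tendsto (fun ε : ℝ => re ⟪Ring.inverse (Λ ε) y, y⟫)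
        (nhdsWithin 0 (Set.Ioi 0)) (nhds (re ⟪G y, y⟫)) :=
      (RCLike.continuous_re.tendsto _).comp (hGre y y)
    refine ge_of_tendsto hf (hEv.mono fun ε hε => ?_)
    obtain ⟨h, hPh, heq⟩ := (Stmt9Aux2.core (K + (ε : ℂ) • (1 : H →L[ℂ] H)) (hpos ε hε)
      (Λ ε) (hΛ ε hε) (hΛu ε hε)).2 y
    rw [heq, shift_inner]
    have h1 := hc h hPh
    have h2 : 0 ≤ ε * re ⟪h, h⟫ := mul_nonneg hε.le inner_self_nonneg
    linarith
  · intro a b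
    have h1 : Tendsto (fun ε : ℝ => ⟪Ring.inverse (Λ ε) a, b⟫)
        (nhdsWithin 0 (Set.Ioi 0)) (nhds ⟪G a, b⟫) := hGre a b
    have h2 : Tendsto (fun ε : ℝ => ⟪a, Ring.inverse (Λ ε) b⟫)
        (nhdsWithin 0 (Set.Ioi 0)) (nhds ⟪a, G b⟫) :=
      Filter.Tendsto.inner tendsto_const_nhds (hG b)
    have heq : ∀ᶠ ε : ℝ in nhdsWithin 0 (Set.Ioi 0),
        ⟪Ring.inverse (Λ ε) a, b⟫ = ⟪a, Ring.inverse (Λ ε) b⟫ :=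
      hEv.mono fun ε hε => Stmt9Aux2.inv_symm (Λ ε) (hΛu ε hε)
        (Stmt9Aux2.lambda_symm (K + (ε : ℂ) • (1 : H →L[ℂ] H))
          (hpos ε hε).isSelfAdjoint (Λ ε) (hΛ ε hε)) a b
    exact tendsto_nhds_unique (h1.congr' heq) h2

end Stmt9Aux3

namespace Stmt9Aux4

variable {H : Type*} [NormedAddCommGroup H] [InnerProductSpace ℂ H] [CompleteSpace H]
variable {M : Submodule ℂ H} [CompleteSpace M]

local notation "⟪" x ", " y "⟫" => @inner ℂ _ _ x y

open RCLike

lemma one_sub_block (T : M →L[ℂ] M) (Γ : M →L[ℂ] Mᗮ) (X : Mᗮ →L[ℂ] Mᗮ) :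
    (1 : H →L[ℂ] H) - blockOpH M T Γ X = blockOpH M (1 - T) (-Γ) (1 - X) := by
  ext h
  have hadj : ContinuousLinearMap.adjoint (-Γ) = -ContinuousLinearMap.adjoint Γ :=
    map_neg (ContinuousLinearMap.adjoint :
      (M →L[ℂ] Mᗮ) ≃ₗᵢ⋆[ℂ] (Mᗮ →L[ℂ] M)) Γ
  simp only [blockOpH, ContinuousLinearMap.sub_apply, ContinuousLinearMap.add_apply,
    ContinuousLinearMap.comp_apply, ContinuousLinearMap.one_apply, hadj,
    ContinuousLinearMap.neg_apply, Submodule.coe_subtypeL', Submodule.subtype_apply,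
    Submodule.coe_add, Submodule.coe_sub, Submodule.coe_neg]
  set m := Submodule.orthogonalProjectionOnto M h with hm
  set y := Submodule.orthogonalProjectionOnto Mᗮ h with hy
  have hdec : (m : H) + (y : H) = h :=
    Submodule.starProjection_add_starProjection_orthogonal (K := M) h
  rw [← hdec]
  abel

lemma comp_T' (K : H →L[ℂ] H) (T : M →L[ℂ] M)
    (hT : T = (Submodule.orthogonalProjectionOnto M).comp (K.comp M.subtypeL)) :
    (1 : M →L[ℂ] M) - T
      = (Submodule.orthogonalProjectionOnto M).comp (((1 : H →L[ℂ] H) - K).comp M.subtypeL) := by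
  ext m
  simp [hT, Submodule.orthogonalProjectionOnto_mem_subspace_eq_self]

lemma comp_Γ' (K : H →L[ℂ] H) (Γ : M →L[ℂ] Mᗮ)
    (hΓ : Γ = (Submodule.orthogonalProjectionOnto Mᗮ).comp (K.comp M.subtypeL)) :
    -Γ = (Submodule.orthogonalProjectionOnto Mᗮ).comp (((1 : H →L[ℂ] H) - K).comp M.subtypeL) := by
  ext m
  have h0 : Submodule.orthogonalProjectionOnto Mᗮ ((m : M) : H) = 0 :=
    Submodule.orthogonalProjectionOnto_apply_of_mem_orthogonal
      (Submodule.le_orthogonal_orthogonal M m.2)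
  simp [hΓ, h0]

lemma comp_S' (K : H →L[ℂ] H) (S : Mᗮ →L[ℂ] Mᗮ)
    (hS : S = (Submodule.orthogonalProjectionOnto Mᗮ).comp (K.comp Mᗮ.subtypeL)) :
    (1 : Mᗮ →L[ℂ] Mᗮ) - S
      = (Submodule.orthogonalProjectionOnto Mᗮ).comp (((1 : H →L[ℂ] H) - K).comp Mᗮ.subtypeL) := by
  ext y
  simp [hS, Submodule.orthogonalProjectionOnto_mem_subspace_eq_self]

lemma real_sub (a b : ℂ) (ha : ((re a : ℝ) : ℂ) = a) (hb : ((re b : ℝ) : ℂ) = b) :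
    ((re (a - b) : ℝ) : ℂ) = a - b := by
  rw [map_sub]; push_cast; rw [ha, hb]

lemma real_add (a b : ℂ) (ha : ((re a : ℝ) : ℂ) = a) (hb : ((re b : ℝ) : ℂ) = b) :
    ((re (a + b) : ℝ) : ℂ) = a + b := by
  rw [map_add]; push_cast; rw [ha, hb]

end Stmt9Aux4

local notation "⟪" x ", " y "⟫" => @inner ℂ _ _ x y

/-- **minimal and maximal extensions.** With the notation of the theorem on
non-negative contractive extensions, set `X_μ = S − G₁` and `X_M = S + G₂`. Then the block
operators `K_{X_μ}` and `K_{X_M}` are non-negative contractions, and every non-negative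
contractive block extension `K_X` satisfies `K_{X_μ} ≤ K_X ≤ K_{X_M}`. -/
theorem stmt_9
    {H : Type*} [NormedAddCommGroup H] [InnerProductSpace ℂ H] [CompleteSpace H]
    (K : H →L[ℂ] H) (hK : K.IsPositive) (hK1 : ((1 : H →L[ℂ] H) - K).IsPositive)
    (M : Submodule ℂ H) [CompleteSpace M]
    (T : M →L[ℂ] M) (Γ : M →L[ℂ] Mᗮ) (S : Mᗮ →L[ℂ] Mᗮ)
    (hT : T = (Submodule.orthogonalProjectionOnto M).comp (K.comp M.subtypeL))
    (hΓ : Γ = (Submodule.orthogonalProjectionOnto Mᗮ).comp (K.comp M.subtypeL))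
    (hS : S = (Submodule.orthogonalProjectionOnto Mᗮ).comp (K.comp Mᗮ.subtypeL))
    (Λ₁ Λ₂ : ℝ → (Mᗮ →L[ℂ] Mᗮ))
    (hΛ₁ : ∀ ε : ℝ, Λ₁ ε = (Submodule.orthogonalProjectionOnto Mᗮ).comp
      ((Ring.inverse (K + (ε : ℂ) • (1 : H →L[ℂ] H))).comp Mᗮ.subtypeL))
    (hΛ₂ : ∀ ε : ℝ, Λ₂ ε = (Submodule.orthogonalProjectionOnto Mᗮ).comp
      ((Ring.inverse ((1 + ε : ℂ) • (1 : H →L[ℂ] H) - K)).comp Mᗮ.subtypeL))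
    (hΛ₁u : ∀ ε : ℝ, 0 < ε → IsUnit (Λ₁ ε)) (hΛ₂u : ∀ ε : ℝ, 0 < ε → IsUnit (Λ₂ ε))
    (G₁ G₂ : Mᗮ →L[ℂ] Mᗮ)
    (hG₁ : ∀ y : Mᗮ, Filter.Tendsto (fun ε : ℝ => Ring.inverse (Λ₁ ε) y)
      (nhdsWithin 0 (Set.Ioi 0)) (nhds (G₁ y)))
    (hG₂ : ∀ y : Mᗮ, Filter.Tendsto (fun ε : ℝ => Ring.inverse (Λ₂ ε) y)
      (nhdsWithin 0 (Set.Ioi 0)) (nhds (G₂ y)))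
:
    ((blockOpH M T Γ (S - G₁)).IsPositive ∧
        ((1 : H →L[ℂ] H) - blockOpH M T Γ (S - G₁)).IsPositive) ∧
    ((blockOpH M T Γ (S + G₂)).IsPositive ∧
        ((1 : H →L[ℂ] H) - blockOpH M T Γ (S + G₂)).IsPositive) ∧
    ∀ X : Mᗮ →L[ℂ] Mᗮ, IsSelfAdjoint X →
      (blockOpH M T Γ X).IsPositive →
      ((1 : H →L[ℂ] H) - blockOpH M T Γ X).IsPositive →
        (blockOpH M T Γ X - blockOpH M T Γ (S - G₁)).IsPositive ∧
        (blockOpH M T Γ (S + G₂) - blockOpH M T Γ X).IsPositive := by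
  have hKsa := hK.isSelfAdjoint
  have hK1sa := hK1.isSelfAdjoint
  have hΛ₂' : ∀ ε : ℝ, 0 < ε → Λ₂ ε = (Submodule.orthogonalProjectionOnto Mᗮ).comp
      ((Ring.inverse (((1 : H →L[ℂ] H) - K)
        + (ε : ℂ) • (1 : H →L[ℂ] H))).comp Mᗮ.subtypeL) := by
    intro ε _
    rw [hΛ₂ ε]
    have heq : (1 + (ε : ℂ)) • (1 : H →L[ℂ] H) - K
        = ((1 : H →L[ℂ] H) - K) + (ε : ℂ) • (1 : H →L[ℂ] H) := by
      rw [add_smul, one_smul]; abel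
    rw [heq]
  have F1 := Stmt9Aux3.facts K hK Λ₁ (fun ε _ => hΛ₁ ε) hΛ₁u G₁ hG₁
  have F2 := Stmt9Aux3.facts ((1 : H →L[ℂ] H) - K) hK1 Λ₂ hΛ₂' hΛ₂u G₂ hG₂
  have idK := Stmt9Aux.inner_blockOpH K hKsa T Γ S hT hΓ hS
  have hT' := Stmt9Aux4.comp_T' K T hT
  have hΓ' := Stmt9Aux4.comp_Γ' K Γ hΓ
  have hS' := Stmt9Aux4.comp_S' K S hS
  have idK' := Stmt9Aux.inner_blockOpH ((1 : H →L[ℂ] H) - K) hK1sa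
    (1 - T) (-Γ) (1 - S) hT' hΓ' hS'
  have hreK : ∀ x : H, ((RCLike.re ⟪K x, x⟫ : ℝ) : ℂ) = ⟪K x, x⟫ :=
    fun x => ((ContinuousLinearMap.isPositive_iff_complex K).mp hK x).1
  have hreK1 : ∀ x : H, ((RCLike.re ⟪((1 : H →L[ℂ] H) - K) x, x⟫ : ℝ) : ℂ)
      = ⟪((1 : H →L[ℂ] H) - K) x, x⟫ :=
    fun x => ((ContinuousLinearMap.isPositive_iff_complex _).mp hK1 x).1
  have hreG1 : ∀ u : Mᗮ, ((RCLike.re ⟪G₁ u, u⟫ : ℝ) : ℂ) = ⟪G₁ u, u⟫ := fun u =>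
    RCLike.conj_eq_iff_re.mp (by rw [inner_conj_symm]; exact (F1.2.2 u u).symm)
  have hreG2 : ∀ u : Mᗮ, ((RCLike.re ⟪G₂ u, u⟫ : ℝ) : ℂ) = ⟪G₂ u, u⟫ := fun u =>
    RCLike.conj_eq_iff_re.mp (by rw [inner_conj_symm]; exact (F2.2.2 u u).symm)
  -- the four inner-product identities
  have hidμ : ∀ x : H, ⟪blockOpH M T Γ (S - G₁) x, x⟫
      = ⟪K x, x⟫ - ⟪G₁ (Submodule.orthogonalProjectionOnto Mᗮ x),
          (Submodule.orthogonalProjectionOnto Mᗮ x : Mᗮ)⟫ := by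
    intro x
    rw [idK (S - G₁) x,
      show (S - G₁) (Submodule.orthogonalProjectionOnto Mᗮ x) - S (Submodule.orthogonalProjectionOnto Mᗮ x)
        = -(G₁ (Submodule.orthogonalProjectionOnto Mᗮ x)) by
        simp only [ContinuousLinearMap.sub_apply]; abel,
      inner_neg_left]
    ring
  have hidM : ∀ x : H, ⟪blockOpH M T Γ (S + G₂) x, x⟫
      = ⟪K x, x⟫ + ⟪G₂ (Submodule.orthogonalProjectionOnto Mᗮ x),
          (Submodule.orthogonalProjectionOnto Mᗮ x : Mᗮ)⟫ := by
    intro x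
    rw [idK (S + G₂) x,
      show (S + G₂) (Submodule.orthogonalProjectionOnto Mᗮ x) - S (Submodule.orthogonalProjectionOnto Mᗮ x)
        = G₂ (Submodule.orthogonalProjectionOnto Mᗮ x) by
        simp only [ContinuousLinearMap.add_apply]; abel]
  have P1pos : (blockOpH M T Γ (S - G₁)).IsPositive := by
    rw [ContinuousLinearMap.isPositive_iff_complex]
    intro x
    rw [hidμ x]
    refine ⟨Stmt9Aux4.real_sub _ _ (hreK x) (hreG1 _), ?_⟩
    rw [map_sub]
    have := F1.1 x
    linarith
  have P3pos : (blockOpH M T Γ (S + G₂)).IsPositive := by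
    rw [ContinuousLinearMap.isPositive_iff_complex]
    intro x
    rw [hidM x]
    refine ⟨Stmt9Aux4.real_add _ _ (hreK x) (hreG2 _), ?_⟩
    rw [map_add]
    have h1 := hK.re_inner_nonneg_left x
    have h2 := F2.2.1 (Submodule.orthogonalProjectionOnto Mᗮ x) 0
      (fun h _ => hK1.re_inner_nonneg_left h)
    linarith
  have P2pos : ((1 : H →L[ℂ] H) - blockOpH M T Γ (S - G₁)).IsPositive := by
    rw [Stmt9Aux4.one_sub_block, ContinuousLinearMap.isPositive_iff_complex]
    intro x
    have hid : ⟪blockOpH M (1 - T) (-Γ) (1 - (S - G₁)) x, x⟫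
        = ⟪((1 : H →L[ℂ] H) - K) x, x⟫
          + ⟪G₁ (Submodule.orthogonalProjectionOnto Mᗮ x), (Submodule.orthogonalProjectionOnto Mᗮ x : Mᗮ)⟫ := by
      rw [idK' (1 - (S - G₁)) x,
        show (1 - (S - G₁)) (Submodule.orthogonalProjectionOnto Mᗮ x)
            - (1 - S) (Submodule.orthogonalProjectionOnto Mᗮ x)
          = G₁ (Submodule.orthogonalProjectionOnto Mᗮ x) by
          simp only [ContinuousLinearMap.sub_apply, ContinuousLinearMap.one_apply]; abel]
    rw [hid]
    refine ⟨Stmt9Aux4.real_add _ _ (hreK1 x) (hreG1 _), ?_⟩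
    rw [map_add]
    have h1 := hK1.re_inner_nonneg_left x
    have h2 := F1.2.1 (Submodule.orthogonalProjectionOnto Mᗮ x) 0
      (fun h _ => hK.re_inner_nonneg_left h)
    linarith
  have P4pos : ((1 : H →L[ℂ] H) - blockOpH M T Γ (S + G₂)).IsPositive := by
    rw [Stmt9Aux4.one_sub_block, ContinuousLinearMap.isPositive_iff_complex]
    intro x
    have hid : ⟪blockOpH M (1 - T) (-Γ) (1 - (S + G₂)) x, x⟫
        = ⟪((1 : H →L[ℂ] H) - K) x, x⟫
          - ⟪G₂ (Submodule.orthogonalProjectionOnto Mᗮ x), (Submodule.orthogonalProjectionOnto Mᗮ x : Mᗮ)⟫ := by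
      rw [idK' (1 - (S + G₂)) x,
        show (1 - (S + G₂)) (Submodule.orthogonalProjectionOnto Mᗮ x)
            - (1 - S) (Submodule.orthogonalProjectionOnto Mᗮ x)
          = -(G₂ (Submodule.orthogonalProjectionOnto Mᗮ x)) by
          simp only [ContinuousLinearMap.sub_apply, ContinuousLinearMap.add_apply,
            ContinuousLinearMap.one_apply]; abel,
        inner_neg_left]
      ring
    rw [hid]
    refine ⟨Stmt9Aux4.real_sub _ _ (hreK1 x) (hreG2 _), ?_⟩
    rw [map_sub]
    have := F2.1 x
    linarith
  refine ⟨⟨P1pos, P2pos⟩, ⟨P3pos, P4pos⟩, fun X hXsa hXpos hX1pos => ?_⟩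
  constructor
  · refine ⟨hXpos.1.sub P1pos.1, fun x => ?_⟩
    rw [ContinuousLinearMap.reApplyInnerSelf_apply, ContinuousLinearMap.sub_apply,
      inner_sub_left, map_sub, idK X x, hidμ x, map_add, map_sub]
    have key : -(RCLike.re ⟪X (Submodule.orthogonalProjectionOnto Mᗮ x)
        - S (Submodule.orthogonalProjectionOnto Mᗮ x), (Submodule.orthogonalProjectionOnto Mᗮ x : Mᗮ)⟫)
        ≤ RCLike.re ⟪G₁ (Submodule.orthogonalProjectionOnto Mᗮ x), (Submodule.orthogonalProjectionOnto Mᗮ x : Mᗮ)⟫ := by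
      apply F1.2.1 (Submodule.orthogonalProjectionOnto Mᗮ x) _
      intro h hPh
      have h0 := hXpos.2 h
      rw [ContinuousLinearMap.reApplyInnerSelf_apply, idK X h, map_add, hPh] at h0
      linarith
    linarith
  · refine ⟨P3pos.1.sub hXpos.1, fun x => ?_⟩
    rw [ContinuousLinearMap.reApplyInnerSelf_apply, ContinuousLinearMap.sub_apply,
      inner_sub_left, map_sub, idK X x, hidM x, map_add, map_add]
    have key : RCLike.re ⟪X (Submodule.orthogonalProjectionOnto Mᗮ x)
        - S (Submodule.orthogonalProjectionOnto Mᗮ x), (Submodule.orthogonalProjectionOnto Mᗮ x : Mᗮ)⟫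
        ≤ RCLike.re ⟪G₂ (Submodule.orthogonalProjectionOnto Mᗮ x), (Submodule.orthogonalProjectionOnto Mᗮ x : Mᗮ)⟫ := by
      apply F2.2.1 (Submodule.orthogonalProjectionOnto Mᗮ x) _
      intro h hPh
      have h0 := hX1pos.2 h
      rw [ContinuousLinearMap.reApplyInnerSelf_apply, ContinuousLinearMap.sub_apply,
        ContinuousLinearMap.one_apply, inner_sub_left, map_sub, idK X h, map_add, hPh] at h0
      rw [ContinuousLinearMap.sub_apply, ContinuousLinearMap.one_apply]
      have hsplit : (⟪h - K h, h⟫ : ℂ) = ⟪h, h⟫ - ⟪K h, h⟫ := inner_sub_left _ _ _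
      rw [hsplit, map_sub]
      linarith
    linarith
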